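/- Let G be a finite group with irreducible 2-dimensional representations φᵢ (i ≥ 0, with φ₀ = ρ the defining representation of determinant δ) satisfying φᵢ ⊗ ρ ≅ δ(φ_{i-1} ⊕ φ_{i+1}) for all i in range. Let m ≥ 1 be minimal with δᵐφᵢ ≅ φᵢ and k ≥ 1 minimal with δᵏφ_{i+1} ≅ φ_{i+1}. Then m = k; i.e., consecutive representations in the chain have δ-orbits of equal size. -/

import Mathlib

open Matrix

noncomputable section

/-- A matrix representation is irreducible if the only invariant subspaces of `ℂⁿ`
are `⊥` and `⊤`. -/
def MatRep.IsIrred {G : Type*} [Group G] {n : ℕ}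
    (ρ : G →* Matrix.GeneralLinearGroup (Fin n) ℂ) : Prop :=
  ∀ p : Submodule ℂ (Fin n → ℂ),
    (∀ g : G, ∀ v ∈ p, Matrix.mulVec (ρ g : Matrix (Fin n) (Fin n) ℂ) v ∈ p) →
      p = ⊥ ∨ p = ⊤

/-- `δᵏ ⊗ ψ ≅ ψ` for a one-dimensional character `δ` and a 2-dimensional
representation `ψ`. -/
def TwistIsoBy {G : Type*} [Group G] (δ : G →* ℂˣ)
    (ψ : G →* Matrix.GeneralLinearGroup (Fin 2) ℂ) (k : ℕ) : Prop :=
  ∃ P : Matrix.GeneralLinearGroup (Fin 2) ℂ, ∀ g : G,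
    ((P * ψ g * P⁻¹ : Matrix.GeneralLinearGroup (Fin 2) ℂ) : Matrix (Fin 2) (Fin 2) ℂ)
      = ((δ g : ℂ)) ^ k • (ψ g : Matrix (Fin 2) (Fin 2) ℂ)

/-- Character of a 2-dimensional matrix representation. -/
def chr {G : Type*} [Group G] (ψ : G →* Matrix.GeneralLinearGroup (Fin 2) ℂ) (g : G) : ℂ :=
  Matrix.trace (ψ g : Matrix (Fin 2) (Fin 2) ℂ)

/-- Let `G` be a finite group with a chain of irreducible 2-dimensional
representations `… φᵢ₋₁, φᵢ, φᵢ₊₁, φᵢ₊₂ …` (with `φ₀ = ρ` the defining representation of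
determinant character `δ`), satisfying the recursion `φⱼ ⊗ ρ ≅ δφⱼ₋₁ ⊕ δφⱼ₊₁` at the
indices `i` and `i+1`, and such that `(φᵢ, δʲφᵢ₊₂) = 0` and `(φᵢ₊₁, δʲφᵢ₋₁) = 0` for all
`j ∈ ℤ`.  If `m ≥ 1` is minimal with `δᵐφᵢ ≅ φᵢ` and `k ≥ 1` is minimal with
`δᵏφᵢ₊₁ ≅ φᵢ₊₁`, then `m = k`: consecutive members of the chain have `δ`-orbits of equal
size. -/
-- matrix zero if mulVec vanishes
lemma aux_eq_zero (N : Matrix (Fin 2) (Fin 2) ℂ) (h : ∀ v, N *ᵥ v = 0) : N = 0 := by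
  ext i j
  have := congrFun (h (Pi.single j 1)) i
  simpa [Matrix.mulVec_single] using this

lemma aux_schur_unit {G : Type} [Group G] (ψ : G →* Matrix.GeneralLinearGroup (Fin 2) ℂ)
    (hirr : MatRep.IsIrred ψ) (w : G → ℂ) (M : Matrix (Fin 2) (Fin 2) ℂ) (hM : M ≠ 0)
    (hcomm : ∀ g : G, M * (ψ g : Matrix (Fin 2) (Fin 2) ℂ)
      = w g • ((ψ g : Matrix (Fin 2) (Fin 2) ℂ) * M)) : IsUnit M := by
  set p := LinearMap.ker M.mulVecLin with hp
  have hinv : ∀ g : G, ∀ v ∈ p, Matrix.mulVec (ψ g : Matrix (Fin 2) (Fin 2) ℂ) v ∈ p := by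
    intro g v hv
    have hv' : M *ᵥ v = 0 := hv
    show M *ᵥ ((ψ g : Matrix (Fin 2) (Fin 2) ℂ) *ᵥ v) = 0
    rw [Matrix.mulVec_mulVec, hcomm g, Matrix.smul_mulVec, ← Matrix.mulVec_mulVec, hv',
      Matrix.mulVec_zero, smul_zero]
  rcases hirr p hinv with h | h
  · -- ker = ⊥ : injective, so unit
    rw [Matrix.isUnit_iff_isUnit_det, isUnit_iff_ne_zero]
    intro hdet
    obtain ⟨v, hv0, hv⟩ := (Matrix.exists_mulVec_eq_zero_iff).2 hdet
    have hvp : v ∈ p := hv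
    rw [h] at hvp
    exact hv0 (by simpa using hvp)
  · -- ker = ⊤ : M = 0
    exact absurd (aux_eq_zero M fun v => (h ▸ Submodule.mem_top : v ∈ p)) hM

lemma aux_schur_scalar {G : Type} [Group G] (ψ : G →* Matrix.GeneralLinearGroup (Fin 2) ℂ)
    (hirr : MatRep.IsIrred ψ) (M : Matrix (Fin 2) (Fin 2) ℂ)
    (hcomm : ∀ g : G, M * (ψ g : Matrix (Fin 2) (Fin 2) ℂ)
      = (ψ g : Matrix (Fin 2) (Fin 2) ℂ) * M) :
    ∃ c : ℂ, M = c • (1 : Matrix (Fin 2) (Fin 2) ℂ) := by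
  obtain ⟨c, hc⟩ := Module.End.exists_eigenvalue M.mulVecLin
  obtain ⟨v, hv⟩ := hc.exists_hasEigenvector
  refine ⟨c, ?_⟩
  set N : Matrix (Fin 2) (Fin 2) ℂ := M - c • 1 with hN
  set p := LinearMap.ker N.mulVecLin with hp
  have hNv : N *ᵥ v = 0 := by
    have h1 : M *ᵥ v = c • v := hv.apply_eq_smul
    rw [hN, Matrix.sub_mulVec, h1, Matrix.smul_mulVec, Matrix.one_mulVec, sub_self]
  have hinv : ∀ g : G, ∀ u ∈ p, Matrix.mulVec (ψ g : Matrix (Fin 2) (Fin 2) ℂ) u ∈ p := by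
    intro g u hu
    have hu' : N *ᵥ u = 0 := hu
    have hcomm' : N * (ψ g : Matrix (Fin 2) (Fin 2) ℂ) = (ψ g : Matrix (Fin 2) (Fin 2) ℂ) * N := by
      rw [hN, Matrix.sub_mul, Matrix.mul_sub, hcomm g, Matrix.smul_mul, Matrix.one_mul,
        Matrix.mul_smul, Matrix.mul_one]
    show N *ᵥ ((ψ g : Matrix (Fin 2) (Fin 2) ℂ) *ᵥ u) = 0
    rw [Matrix.mulVec_mulVec, hcomm', ← Matrix.mulVec_mulVec, hu', Matrix.mulVec_zero]
  rcases hirr p hinv with h | h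
  · exact absurd (h ▸ (show v ∈ p from hNv)) (by simp [Submodule.mem_bot, hv.2])
  · have : N = 0 := aux_eq_zero N fun u => (h ▸ Submodule.mem_top : u ∈ p)
    rw [← sub_eq_zero]; exact this

lemma aux_entry_sum (A B : Matrix (Fin 2) (Fin 2) ℂ) :
    ∑ a : Fin 2, ∑ b : Fin 2,
      ((A * Matrix.single a b 1 * B : Matrix (Fin 2) (Fin 2) ℂ)) a b
      = A.trace * B.trace := by
  simp [Matrix.mul_apply, Matrix.trace, Matrix.diag, Fin.sum_univ_two, Matrix.single]
  ring


def avg {G : Type} [Group G] [Fintype G] (ψ : G →* Matrix.GeneralLinearGroup (Fin 2) ℂ)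
    (w : G → ℂ) (A : Matrix (Fin 2) (Fin 2) ℂ) : Matrix (Fin 2) (Fin 2) ℂ :=
  ∑ g : G, w g • ((ψ g : Matrix (Fin 2) (Fin 2) ℂ) * A * (ψ g⁻¹ : Matrix (Fin 2) (Fin 2) ℂ))


lemma avg_intertwine {G : Type} [Group G] [Fintype G]
    (ψ : G →* Matrix.GeneralLinearGroup (Fin 2) ℂ) (w : G → ℂ)
    (hw : ∀ a b : G, w (a * b) = w a * w b) (A : Matrix (Fin 2) (Fin 2) ℂ) (h : G) :
    avg ψ w A * (ψ h : Matrix (Fin 2) (Fin 2) ℂ)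
      = w h • ((ψ h : Matrix (Fin 2) (Fin 2) ℂ) * avg ψ w A) := by
  unfold avg
  rw [Finset.sum_mul, Matrix.mul_sum, Finset.smul_sum]
  refine Fintype.sum_equiv (Equiv.mulLeft h⁻¹) _ _ ?_
  intro x
  show w x • ((ψ x : Matrix (Fin 2) (Fin 2) ℂ) * A * (ψ x⁻¹ : Matrix (Fin 2) (Fin 2) ℂ))
        * (ψ h : Matrix (Fin 2) (Fin 2) ℂ)
      = w h • ((ψ h : Matrix (Fin 2) (Fin 2) ℂ) *
          (w (h⁻¹ * x) • ((ψ (h⁻¹ * x) : Matrix (Fin 2) (Fin 2) ℂ) * A *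
            (ψ (h⁻¹ * x)⁻¹ : Matrix (Fin 2) (Fin 2) ℂ))))
  have hx : x = h * (h⁻¹ * x) := by group
  have e1 : (ψ x : Matrix (Fin 2) (Fin 2) ℂ)
      = (ψ h : Matrix (Fin 2) (Fin 2) ℂ) * (ψ (h⁻¹ * x) : Matrix (Fin 2) (Fin 2) ℂ) := by
    rw [← Units.val_mul, ← _root_.map_mul, ← hx]
  have e2 : (ψ x⁻¹ : Matrix (Fin 2) (Fin 2) ℂ) * (ψ h : Matrix (Fin 2) (Fin 2) ℂ)
      = (ψ (h⁻¹ * x)⁻¹ : Matrix (Fin 2) (Fin 2) ℂ) := by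
    rw [← Units.val_mul, ← _root_.map_mul]
    congr 2
    group
  have e3 : w x = w h * w (h⁻¹ * x) := by rw [← hw, ← hx]
  rw [Matrix.smul_mul, Matrix.mul_assoc, Matrix.mul_assoc, e2, e1, e3]
  rw [mul_smul]
  congr 1
  simp only [Matrix.mul_smul, Matrix.mul_assoc]

lemma avg_entry_sum {G : Type} [Group G] [Fintype G]
    (ψ : G →* Matrix.GeneralLinearGroup (Fin 2) ℂ) (w : G → ℂ) :
    ∑ a : Fin 2, ∑ b : Fin 2, (avg ψ w (Matrix.single a b 1)) a b
      = ∑ g : G, w g * (chr ψ g * chr ψ g⁻¹) := by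
  have key : ∀ a b : Fin 2, (avg ψ w (Matrix.single a b 1)) a b
      = ∑ g : G, w g * (((ψ g : Matrix (Fin 2) (Fin 2) ℂ) * Matrix.single a b 1 *
          (ψ g⁻¹ : Matrix (Fin 2) (Fin 2) ℂ) : Matrix (Fin 2) (Fin 2) ℂ) a b) := by
    intro a b
    unfold avg
    rw [Matrix.sum_apply]
    rfl
  simp_rw [key]
  have swap1 : ∀ a : Fin 2, (∑ b : Fin 2, ∑ g : G, w g *
      (((ψ g : Matrix (Fin 2) (Fin 2) ℂ) * Matrix.single a b 1 *
        (ψ g⁻¹ : Matrix (Fin 2) (Fin 2) ℂ) : Matrix (Fin 2) (Fin 2) ℂ) a b))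
      = ∑ g : G, ∑ b : Fin 2, w g *
      (((ψ g : Matrix (Fin 2) (Fin 2) ℂ) * Matrix.single a b 1 *
        (ψ g⁻¹ : Matrix (Fin 2) (Fin 2) ℂ) : Matrix (Fin 2) (Fin 2) ℂ) a b) :=
    fun a => Finset.sum_comm
  simp_rw [swap1]
  rw [Finset.sum_comm]
  refine Finset.sum_congr rfl ?_
  intro g _
  simp_rw [← Finset.mul_sum]
  exact congrArg _ (aux_entry_sum _ _)


lemma aux_sum_chr_self {G : Type} [Group G] [Fintype G]
    (ψ : G →* Matrix.GeneralLinearGroup (Fin 2) ℂ) (hirr : MatRep.IsIrred ψ) :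
    ∑ g : G, chr ψ g * chr ψ g⁻¹ = (Fintype.card G : ℂ) := by
  have hone : ∀ a b : G, (fun _ : G => (1:ℂ)) (a * b)
      = (fun _ : G => (1:ℂ)) a * (fun _ : G => (1:ℂ)) b := by intro a b; simp
  have hscal : ∀ A : Matrix (Fin 2) (Fin 2) ℂ,
      ∃ c : ℂ, avg ψ (fun _ => (1:ℂ)) A = c • (1 : Matrix (Fin 2) (Fin 2) ℂ) := by
    intro A
    refine aux_schur_scalar ψ hirr _ (fun g => ?_)
    have := avg_intertwine ψ (fun _ => (1:ℂ)) hone A g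
    simpa using this
  obtain ⟨c00, hc00⟩ := hscal (Matrix.single 0 0 1)
  obtain ⟨c01, hc01⟩ := hscal (Matrix.single 0 1 1)
  obtain ⟨c10, hc10⟩ := hscal (Matrix.single 1 0 1)
  obtain ⟨c11, hc11⟩ := hscal (Matrix.single 1 1 1)
  have hdiag : avg ψ (fun _ => (1:ℂ)) (Matrix.single 0 0 1)
      + avg ψ (fun _ => (1:ℂ)) (Matrix.single 1 1 1)
      = (Fintype.card G : ℂ) • (1 : Matrix (Fin 2) (Fin 2) ℂ) := by
    unfold avg
    rw [← Finset.sum_add_distrib]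
    have e : ∀ g : G, (1:ℂ) • ((ψ g : Matrix (Fin 2) (Fin 2) ℂ) * Matrix.single 0 0 1 *
          (ψ g⁻¹ : Matrix (Fin 2) (Fin 2) ℂ))
        + (1:ℂ) • ((ψ g : Matrix (Fin 2) (Fin 2) ℂ) * Matrix.single 1 1 1 *
          (ψ g⁻¹ : Matrix (Fin 2) (Fin 2) ℂ)) = 1 := by
      intro g
      have he : (Matrix.single 0 0 1 : Matrix (Fin 2) (Fin 2) ℂ)
          + Matrix.single 1 1 1 = 1 := by
        ext i j
        fin_cases i <;> fin_cases j <;>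
          simp [Matrix.single, Matrix.one_apply]
      rw [one_smul, one_smul, ← Matrix.add_mul, ← Matrix.mul_add, he, Matrix.mul_one,
        ← Units.val_mul, ← _root_.map_mul, mul_inv_cancel, _root_.map_one, Units.val_one]
    rw [Finset.sum_congr rfl (fun g _ => e g)]
    rw [Finset.sum_const, Finset.card_univ, ← Nat.cast_smul_eq_nsmul ℂ]
  have hsum := avg_entry_sum ψ (fun _ : G => (1:ℂ))
  simp only [one_mul] at hsum
  rw [← hsum]
  rw [Fin.sum_univ_two, Fin.sum_univ_two, Fin.sum_univ_two]
  rw [hc00, hc01, hc10, hc11]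
  have hv := congrFun (congrFun hdiag 0) 0
  rw [hc00, hc11] at hv
  simp [Matrix.one_apply] at hv ⊢
  linear_combination hv


set_option maxHeartbeats 1000000 in
lemma aux_key {G : Type} [Group G] [Fintype G]
    (ψ : G →* Matrix.GeneralLinearGroup (Fin 2) ℂ) (hirr : MatRep.IsIrred ψ)
    (w : G → ℂ) (hw : ∀ a b : G, w (a * b) = w a * w b)
    (hS : ∑ g : G, w g * (chr ψ g * chr ψ g⁻¹) ≠ 0) :
    ∃ P : Matrix.GeneralLinearGroup (Fin 2) ℂ, ∀ g : G,
      ((P * ψ g * P⁻¹ : Matrix.GeneralLinearGroup (Fin 2) ℂ) : Matrix (Fin 2) (Fin 2) ℂ)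
        = w g • (ψ g : Matrix (Fin 2) (Fin 2) ℂ) := by
  have hex : ∃ a b : Fin 2, avg ψ w (Matrix.single a b 1) ≠ 0 := by
    by_contra hc
    push_neg at hc
    apply hS
    rw [← avg_entry_sum ψ w]
    refine Finset.sum_eq_zero fun a _ => Finset.sum_eq_zero fun b _ => ?_
    rw [hc a b]
    simp
  obtain ⟨a, b, hne⟩ := hex
  set M := avg ψ w (Matrix.single a b 1) with hM
  clear_value M
  have hcomm : ∀ g : G, M * (ψ g : Matrix (Fin 2) (Fin 2) ℂ)
      = w g • ((ψ g : Matrix (Fin 2) (Fin 2) ℂ) * M) := fun g => by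
    rw [hM]; exact avg_intertwine ψ w hw _ g
  have hU : IsUnit M := aux_schur_unit ψ hirr w M hne hcomm
  refine ⟨hU.unit, fun g => ?_⟩
  have h1 : (hU.unit : Matrix (Fin 2) (Fin 2) ℂ) = M := hU.unit_spec
  have h2 : M * ((hU.unit⁻¹ : _) : Matrix (Fin 2) (Fin 2) ℂ) = 1 := by
    have h3 := hU.unit.mul_inv
    rwa [h1] at h3
  calc ((hU.unit * ψ g * hU.unit⁻¹ : Matrix.GeneralLinearGroup (Fin 2) ℂ)
        : Matrix (Fin 2) (Fin 2) ℂ)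
      = M * (ψ g : Matrix (Fin 2) (Fin 2) ℂ) * ((hU.unit⁻¹ : _) : Matrix (Fin 2) (Fin 2) ℂ) := by
        rw [Units.val_mul, Units.val_mul, h1]
    _ = (w g • ((ψ g : Matrix (Fin 2) (Fin 2) ℂ) * M))
          * ((hU.unit⁻¹ : _) : Matrix (Fin 2) (Fin 2) ℂ) := by
        rw [hcomm g]
    _ = w g • ((ψ g : Matrix (Fin 2) (Fin 2) ℂ)
          * (M * ((hU.unit⁻¹ : _) : Matrix (Fin 2) (Fin 2) ℂ))) := by
        rw [Matrix.smul_mul, Matrix.mul_assoc]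
    _ = w g • (ψ g : Matrix (Fin 2) (Fin 2) ℂ) := by rw [h2, Matrix.mul_one]

lemma aux_twist_chr {G : Type} [Group G] (δ : G →* ℂˣ)
    (ψ : G →* Matrix.GeneralLinearGroup (Fin 2) ℂ) (n : ℕ)
    (h : TwistIsoBy δ ψ n) (g : G) : (δ g : ℂ) ^ n * chr ψ g = chr ψ g := by
  obtain ⟨P, hP⟩ := h
  have := congrArg Matrix.trace (hP g)
  rw [Matrix.trace_smul] at this
  rw [Units.val_mul, Units.val_mul, Matrix.trace_mul_cycle,
    Units.inv_mul, Matrix.one_mul] at this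
  simpa [chr, smul_eq_mul] using this.symm


lemma aux_step {G : Type} [Group G] [Fintype G]
    (ρ ψ ψ' ψ'' : G →* Matrix.GeneralLinearGroup (Fin 2) ℂ) (δ : G →* ℂˣ)
    (hirr' : MatRep.IsIrred ψ')
    (hrec : ∀ g : G, chr ψ g * chr ρ g = (δ g : ℂ) * (chr ψ' g + chr ψ'' g))
    (horth : ∀ j : ℤ, (Fintype.card G : ℂ)⁻¹ *
        ∑ g : G, chr ψ' g * (((δ g⁻¹ : ℂˣ) ^ j : ℂˣ) * chr ψ'' g⁻¹) = 0)
    (n : ℕ) (hiso : TwistIsoBy δ ψ n) : TwistIsoBy δ ψ' n := by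
  have hcard : (Fintype.card G : ℂ) ≠ 0 := Nat.cast_ne_zero.mpr Fintype.card_ne_zero
  have horth' : ∀ j : ℤ,
      ∑ g : G, chr ψ' g * (((δ g⁻¹ : ℂˣ) ^ j : ℂˣ) * chr ψ'' g⁻¹) = 0 := by
    intro j
    have := horth j
    rcases mul_eq_zero.mp this with h | h
    · exact absurd h (inv_ne_zero hcard)
    · exact h
  have hB : ∀ g : G, (δ g : ℂ) ^ n * (chr ψ' g + chr ψ'' g) = chr ψ' g + chr ψ'' g := by
    intro g
    have h0 : (δ g : ℂ) ≠ 0 := Units.ne_zero _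
    apply mul_left_cancel₀ h0
    calc (δ g : ℂ) * ((δ g : ℂ) ^ n * (chr ψ' g + chr ψ'' g))
        = (δ g : ℂ) ^ n * ((δ g : ℂ) * (chr ψ' g + chr ψ'' g)) := by ring
      _ = (δ g : ℂ) ^ n * (chr ψ g * chr ρ g) := by rw [hrec]
      _ = ((δ g : ℂ) ^ n * chr ψ g) * chr ρ g := by ring
      _ = chr ψ g * chr ρ g := by rw [aux_twist_chr δ ψ n hiso g]
      _ = (δ g : ℂ) * (chr ψ' g + chr ψ'' g) := hrec g
  -- the orthogonality sums, reindexed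
  have hX : ∑ g : G, chr ψ'' g * chr ψ' g⁻¹ = 0 := by
    rw [← horth' 0]
    refine Fintype.sum_equiv (Equiv.inv G) _ _ ?_
    intro x
    simp only [Equiv.inv_apply, inv_inv, zpow_zero, Units.val_one, one_mul]
    ring
  have hY : ∑ g : G, (δ g : ℂ) ^ n * chr ψ'' g * chr ψ' g⁻¹ = 0 := by
    rw [← horth' (n : ℤ)]
    refine Fintype.sum_equiv (Equiv.inv G) _ _ ?_
    intro x
    simp only [Equiv.inv_apply, inv_inv, zpow_natCast, Units.val_pow_eq_pow_val]
    ring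
  have hsum : ∑ g : G, ((δ g : ℂ) ^ n) * (chr ψ' g * chr ψ' g⁻¹)
      = (Fintype.card G : ℂ) := by
    have e : ∀ g : G, ((δ g : ℂ) ^ n) * (chr ψ' g * chr ψ' g⁻¹)
        = chr ψ' g * chr ψ' g⁻¹ + chr ψ'' g * chr ψ' g⁻¹
          - (δ g : ℂ) ^ n * chr ψ'' g * chr ψ' g⁻¹ := by
      intro g
      linear_combination (chr ψ' g⁻¹) * hB g
    rw [Finset.sum_congr rfl (fun g _ => e g), Finset.sum_sub_distrib,
      Finset.sum_add_distrib, hX, hY, aux_sum_chr_self ψ' hirr']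
    ring
  have hw : ∀ a b : G, ((δ (a * b) : ℂˣ) : ℂ) ^ n
      = ((δ a : ℂˣ) : ℂ) ^ n * ((δ b : ℂˣ) : ℂ) ^ n := by
    intro a b
    rw [_root_.map_mul δ a b, Units.val_mul, mul_pow]
  exact aux_key ψ' hirr' (fun g => (δ g : ℂ) ^ n) hw (hsum ▸ hcard)


theorem delta_orbits_of_consecutive_have_equal_size
    (G : Type) [Group G] [Fintype G]
    (ρ φim φi φip φipp : G →* Matrix.GeneralLinearGroup (Fin 2) ℂ)
    (δ : G →* ℂˣ)
    (hdet : ∀ g : G, (δ g : ℂ) = ((ρ g : Matrix (Fin 2) (Fin 2) ℂ)).det)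
    (hirri : MatRep.IsIrred φi) (hirrip : MatRep.IsIrred φip)
    (h1 : ∀ g : G, chr φi g * chr ρ g = (δ g : ℂ) * (chr φim g + chr φip g))
    (h2 : ∀ g : G, chr φip g * chr ρ g = (δ g : ℂ) * (chr φi g + chr φipp g))
    (h3 : ∀ j : ℤ, (Fintype.card G : ℂ)⁻¹ *
        ∑ g : G, chr φi g * (((δ g⁻¹ : ℂˣ) ^ j : ℂˣ) * chr φipp g⁻¹) = 0)
    (h4 : ∀ j : ℤ, (Fintype.card G : ℂ)⁻¹ *
        ∑ g : G, chr φip g * (((δ g⁻¹ : ℂˣ) ^ j : ℂˣ) * chr φim g⁻¹) = 0)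
    (m k : ℕ) (hm1 : 1 ≤ m) (hk1 : 1 ≤ k)
    (hmiso : TwistIsoBy δ φi m)
    (hmmin : ∀ m' : ℕ, 1 ≤ m' → m' < m → ¬ TwistIsoBy δ φi m')
    (hkiso : TwistIsoBy δ φip k)
    (hkmin : ∀ k' : ℕ, 1 ≤ k' → k' < k → ¬ TwistIsoBy δ φip k') :
    m = k := by
  have t1 : TwistIsoBy δ φi k := aux_step ρ φip φi φipp δ hirri h2 h3 k hkiso
  have t2 : TwistIsoBy δ φip m := by
    refine aux_step ρ φi φip φim δ hirrip (fun g => ?_) h4 m hmiso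
    rw [h1 g]
    ring
  rcases lt_trichotomy m k with h | h | h
  · exact absurd t2 (hkmin m hm1 h)
  · exact h
  · exact absurd t1 (hmmin k hk1 h)
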